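/- Let G be an undirected k-tree with a layer decomposition in which layer 0 is a k-clique containing t, each vertex in layer i > 0 has exactly k neighbors in lower layers forming a k-clique, and no two vertices in the same layer are adjacent. Then no shortest path from s to t contains two consecutive vertices u, v (in order from s to t) with layer(u) < layer(v). -/

import Mathlib

/-- The edge set of a complete graph on the vertex set `V`. -/
def cliqueEdges (V : Finset ℕ) : Finset (Sym2 ℕ) :=
  ((V ×ˢ V).filter (fun p => p.1 ≠ p.2)).image (fun p => s(p.1, p.2))

/-- `X` is a clique with respect to the edge set `E`. -/
def IsCliqueIn (E : Finset (Sym2 ℕ)) (X : Finset ℕ) : Prop :=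
  ∀ x ∈ X, ∀ y ∈ X, x ≠ y → s(x, y) ∈ E

/-- Inductive definition of a `k`-tree with vertex set `V` and edge set `E`:
a `k`-clique is a `k`-tree, and one may add a new vertex joined to all
vertices of an existing `k`-clique (the support). -/
inductive IsKTree (k : ℕ) : Finset ℕ → Finset (Sym2 ℕ) → Prop where
  | base (V : Finset ℕ) (h : V.card = k) : IsKTree k V (cliqueEdges V)
  | extend (V : Finset ℕ) (E : Finset (Sym2 ℕ)) (X : Finset ℕ) (v : ℕ)
      (ht : IsKTree k V E) (hXV : X ⊆ V) (hX : X.card = k)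
      (hclique : IsCliqueIn E X) (hv : v ∉ V) :
      IsKTree k (insert v V) (E ∪ X.image (fun x => s(x, v)))

/-- A layer decomposition of the (undirected) graph `(V, E)` with respect to
the target vertex `t`: layer `0` is a `k`-clique containing `t`; each vertex
in a layer `i > 0` has exactly `k` neighbours in strictly lower layers, and
these form a `k`-clique; no two vertices in the same layer are adjacent. -/
def LayerDecomp (k : ℕ) (V : Finset ℕ) (E : Finset (Sym2 ℕ))
    (layer : ℕ → ℕ) (t : ℕ) : Prop :=
  t ∈ V ∧ layer t = 0 ∧
  (V.filter (fun v => layer v = 0)).card = k ∧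
  IsCliqueIn E (V.filter (fun v => layer v = 0)) ∧
  (∀ v ∈ V, 0 < layer v →
    (V.filter (fun u => s(u, v) ∈ E ∧ layer u < layer v)).card = k ∧
    IsCliqueIn E (V.filter (fun u => s(u, v) ∈ E ∧ layer u < layer v))) ∧
  (∀ u ∈ V, ∀ v ∈ V, s(u, v) ∈ E → layer u ≠ layer v)

/-- A walk from `s` to `t` in the graph `(V, E)`, as a list of vertices. -/
def IsWalk (V : Finset ℕ) (E : Finset (Sym2 ℕ)) (s t : ℕ) (p : List ℕ) : Prop :=
  p.head? = some s ∧ p.getLast? = some t ∧ (∀ v ∈ p, v ∈ V) ∧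
  p.Chain' (fun a b => s(a, b) ∈ E)

/-- A shortest path from `s` to `t`: a walk of minimum length. -/
def IsShortestPath (V : Finset ℕ) (E : Finset (Sym2 ℕ)) (s t : ℕ)
    (p : List ℕ) : Prop :=
  IsWalk V E s t p ∧ ∀ q : List ℕ, IsWalk V E s t q → p.length ≤ q.length


lemma walk_shortcut1 (V : Finset ℕ) (E : Finset (Sym2 ℕ)) (s t : ℕ)
    (a : List ℕ) (u v w : ℕ) (r : List ℕ)
    (hw : IsWalk V E s t (a ++ u :: v :: w :: r)) (he : s(u, w) ∈ E) :
    IsWalk V E s t (a ++ u :: w :: r) := by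
  obtain ⟨h1, h2, h3, h4⟩ := hw
  refine ⟨?_, ?_, ?_, ?_⟩
  · simpa [List.head?_append] using h1
  · rw [List.getLast?_append_cons] at h2 ⊢
    cases r with
    | nil => simpa using h2
    | cons r0 r' => simp only [List.getLast?_cons_cons] at h2 ⊢; exact h2
  · intro x hx; apply h3; simp at hx ⊢; tauto
  · unfold List.Chain' at h4 ⊢; rw [List.isChain_append] at h4 ⊢
    refine ⟨h4.1, ?_, ?_⟩
    · rw [List.isChain_cons_cons]
      exact ⟨he, (List.isChain_cons_cons.mp (List.isChain_cons_cons.mp h4.2.1).2).2⟩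
    · simpa using h4.2.2

lemma walk_shortcut2 (V : Finset ℕ) (E : Finset (Sym2 ℕ)) (s t : ℕ)
    (a : List ℕ) (u v w : ℕ) (r : List ℕ)
    (hw : IsWalk V E s t (a ++ u :: v :: w :: r)) (he : u = w) :
    IsWalk V E s t (a ++ u :: r) := by
  subst he
  obtain ⟨h1, h2, h3, h4⟩ := hw
  refine ⟨?_, ?_, ?_, ?_⟩
  · simpa [List.head?_append] using h1
  · rw [List.getLast?_append_cons] at h2 ⊢
    cases r with
    | nil => simpa using h2
    | cons r0 r' => simp only [List.getLast?_cons_cons] at h2 ⊢; exact h2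
  · intro x hx; apply h3; simp at hx ⊢; tauto
  · unfold List.Chain' at h4 ⊢; rw [List.isChain_append] at h4 ⊢
    refine ⟨h4.1, ?_, ?_⟩
    · exact (List.isChain_cons_cons.mp (List.isChain_cons_cons.mp h4.2.1).2).2
    · simpa using h4.2.2

/-- In a layered `k`-tree with `t` in layer `0`, no shortest `s`–`t` path
contains two consecutive vertices `u`, `v` (in order from `s` to `t`) with
`layer u < layer v`. -/
theorem shortest_path_layers_nonincreasing (k : ℕ) (V : Finset ℕ)
    (E : Finset (Sym2 ℕ)) (h : IsKTree k V E)
    (layer : ℕ → ℕ) (t : ℕ) (hlay : LayerDecomp k V E layer t)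
    (s : ℕ) (hs : s ∈ V) (p : List ℕ) (hp : IsShortestPath V E s t p) :
    ∀ i : ℕ, (hi : i + 1 < p.length) →
      ¬ layer (p.get ⟨i, by omega⟩) < layer (p.get ⟨i + 1, hi⟩) := by
  obtain ⟨hwalk, hmin⟩ := hp
  obtain ⟨hhead, hlast, hmem, hchain⟩ := hwalk
  obtain ⟨htV, hlt, hcard0, hcl0, hnbrs, hdiff⟩ := hlay
  have hplen : 0 < p.length := by cases p <;> simp_all
  have hlastt : p[p.length - 1]'(by omega) = t := by
    rw [List.getLast?_eq_getElem?, List.getElem?_eq_getElem (by omega)] at hlast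
    exact Option.some.inj hlast
  suffices H : ∀ n i, (hi1 : i + 1 < p.length) → p.length - i ≤ n →
      layer (p[i]'(by omega)) < layer (p[i+1]'hi1) → False by
    intro i hi hcon
    simp only [List.get_eq_getElem] at hcon
    exact H p.length i hi (by omega) hcon
  intro n
  induction n with
  | zero => intro i hi hn; omega
  | succ n ih =>
    intro i hi1 hn hcon
    have hi0 : i < p.length := by omega
    have hchain' := List.isChain_iff_getElem.mp hchain
    have huv : s(p[i]'hi0, p[i+1]'hi1) ∈ E := by
      have := hchain' i (by omega)
      simpa [List.get_eq_getElem] using this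
    have huV : p[i]'hi0 ∈ V := hmem _ (List.getElem_mem _)
    have hvV : p[i+1]'hi1 ∈ V := hmem _ (List.getElem_mem _)
    have hvne : p[i+1]'hi1 ≠ t := by
      intro h; rw [h, hlt] at hcon; omega
    have hi2 : i + 2 < p.length := by
      by_contra hc
      apply hvne
      have : i + 1 = p.length - 1 := by omega
      rw [← hlastt]
      congr 1
    have hwV : p[i+2]'hi2 ∈ V := hmem _ (List.getElem_mem _)
    have hvw : s(p[i+1]'hi1, p[i+2]'hi2) ∈ E := by
      have := hchain' (i+1) (by omega)
      simpa [List.get_eq_getElem] using this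
    have hvwne : layer (p[i+1]'hi1) ≠ layer (p[i+2]'hi2) :=
      hdiff _ hvV _ hwV hvw
    rcases Nat.lt_or_ge (layer (p[i+1]'hi1)) (layer (p[i+2]'hi2)) with hup | hdn
    · exact ih (i+1) hi2 (by omega) hup
    · -- layer w < layer v : shortcut
      have hwlt : layer (p[i+2]'hi2) < layer (p[i+1]'hi1) := by omega
      have hclq := (hnbrs _ hvV (by omega)).2
      have humem : p[i]'hi0 ∈ V.filter
          (fun u => s(u, p[i+1]'hi1) ∈ E ∧ layer u < layer (p[i+1]'hi1)) := by
        simp only [Finset.mem_filter]; exact ⟨huV, huv, hcon⟩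
      have hwmem : p[i+2]'hi2 ∈ V.filter
          (fun u => s(u, p[i+1]'hi1) ∈ E ∧ layer u < layer (p[i+1]'hi1)) := by
        simp only [Finset.mem_filter]
        exact ⟨hwV, by rwa [Sym2.eq_swap], hwlt⟩
      -- decomposition of p
      have hdec : p = p.take i ++ (p[i]'hi0) :: (p[i+1]'hi1) :: (p[i+2]'hi2)
          :: p.drop (i+3) := by
        conv_lhs => rw [← List.take_append_drop i p]
        rw [List.drop_eq_getElem_cons hi0, List.drop_eq_getElem_cons hi1,
          List.drop_eq_getElem_cons hi2]
      have hw : IsWalk V E s t (p.take i ++ (p[i]'hi0) :: (p[i+1]'hi1)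
          :: (p[i+2]'hi2) :: p.drop (i+3)) := by
        rw [← hdec]; exact ⟨hhead, hlast, hmem, hchain⟩
      have hplen3 : p.length = (p.take i).length + (p.drop (i+3)).length + 3 := by
        conv_lhs => rw [hdec]
        simp; omega
      by_cases hne : p[i]'hi0 = p[i+2]'hi2
      · have hq := walk_shortcut2 V E s t _ _ _ _ _ hw hne
        have := hmin _ hq
        simp only [List.length_append, List.length_cons] at this
        omega
      · have he : s(p[i]'hi0, p[i+2]'hi2) ∈ E := hclq _ humem _ hwmem hne
        have hq := walk_shortcut1 V E s t _ _ _ _ _ hw he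
        have := hmin _ hq
        simp only [List.length_append, List.length_cons] at this
        omega
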